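/- Let H be a real Hilbert space and C a nonempty closed convex subset of H. Let T_1,…,T_N : C → C be asymptotically quasi-nonexpansive mappings with a common sequence {k_n} ⊂ [1,∞), k_n → 1, and suppose each T_i is uniformly L_i-Lipschitz. Suppose F = ⋂_{i=1}^N F(T_i) is nonempty and bounded, say F ⊆ {u ∈ C : ‖u‖ ≤ ω} for some ω > 0. Let {α_n} ⊂ [0,1] with α_n → 0, and set ε_n = (k_n − 1)(ω + ‖x_n‖)². Let {x_n} be generated by: x_0 ∈ C, C_0 = C; y_n^i = α_n x_n + (1 − α_n) T_i^n x_n for i = 1,…,N; choose i_n ∈ {1,…,N} with ‖y_n^{i_n} − x_n‖ = max_{1≤i≤N} ‖y_n^i − x_n‖ and set ȳ_n = y_n^{i_n}; C_{n+1} = {v ∈ C_n : ‖v − ȳ_n‖² ≤ ‖v − x_n‖² + ε_n}; and x_{n+1} is the metric projection of x_0 onto C_{n+1}. Then {x_n} converges strongly to the metric projection of x_0 onto F. -/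

import Mathlib

open Filter Topology

set_option maxHeartbeats 2000000

/-- Parallel hybrid method for a finite family of asymptotically quasi-nonexpansive
mappings in a real Hilbert space (Theorem 3.1, Hilbert-space form). -/
theorem stmt_0
    {H : Type*} [NormedAddCommGroup H] [InnerProductSpace ℝ H] [CompleteSpace H]
    (C : Set H) (hCne : C.Nonempty) (hCcl : IsClosed C) (hCcv : Convex ℝ C)
    (N : ℕ) (hN : 0 < N) (T : Fin N → H → H) (hTmaps : ∀ i, Set.MapsTo (T i) C C)
    (k : ℕ → ℝ) (hk : ∀ n, 1 ≤ k n) (hklim : Tendsto k atTop (𝓝 1))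
    (hAQN : ∀ i, ∀ n, 1 ≤ n → ∀ p ∈ C, T i p = p →
      ∀ x ∈ C, ‖p - (T i)^[n] x‖ ^ 2 ≤ k n * ‖p - x‖ ^ 2)
    (L : Fin N → ℝ)
    (hLip : ∀ i, ∀ n, 1 ≤ n → ∀ x ∈ C, ∀ y ∈ C,
      ‖(T i)^[n] x - (T i)^[n] y‖ ≤ L i * ‖x - y‖)
    (F : Set H) (hF : F = ⋂ i, {x ∈ C | T i x = x}) (hFne : F.Nonempty)
    (ω : ℝ) (hω : 0 < ω) (hFbdd : ∀ u ∈ F, ‖u‖ ≤ ω)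
    (α : ℕ → ℝ) (hα : ∀ n, α n ∈ Set.Icc (0 : ℝ) 1) (hαlim : Tendsto α atTop (𝓝 0))
    (x : ℕ → H) (y : ℕ → Fin N → H) (i_ : ℕ → Fin N) (CS : ℕ → Set H)
    (hx0 : x 0 ∈ C) (hCS0 : CS 0 = C)
    (hy : ∀ n i, y n i = α n • x n + (1 - α n) • (T i)^[n] (x n))
    (hmax : ∀ n i, ‖y n i - x n‖ ≤ ‖y n (i_ n) - x n‖)
    (hCS : ∀ n, CS (n + 1) =
      {v ∈ CS n | ‖v - y n (i_ n)‖ ^ 2 ≤ ‖v - x n‖ ^ 2 + (k n - 1) * (ω + ‖x n‖) ^ 2})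
    (hproj : ∀ n, x (n + 1) ∈ CS (n + 1) ∧
      ∀ v ∈ CS (n + 1), ‖x (n + 1) - x 0‖ ≤ ‖v - x 0‖) :
    ∃ z ∈ F, (∀ v ∈ F, ‖z - x 0‖ ≤ ‖v - x 0‖) ∧ Tendsto x atTop (𝓝 z) := by
  obtain ⟨p, hp⟩ := hFne
  have hFC : ∀ u ∈ F, u ∈ C := fun u hu => ((Set.mem_iInter.mp (hF ▸ hu)) ⟨0, hN⟩).1
  have hFT : ∀ u ∈ F, ∀ i, T i u = u := fun u hu i => ((Set.mem_iInter.mp (hF ▸ hu)) i).2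
  -- nested sets
  have hsucc : ∀ n, CS (n + 1) ⊆ CS n := by
    intro n v hv; rw [hCS n] at hv; exact hv.1
  have hanti : Antitone CS := antitone_nat_of_succ_le hsucc
  -- x n ∈ CS n and x n ∈ C
  have hxCS : ∀ n, x n ∈ CS n := by
    intro n; cases n with
    | zero => rw [hCS0]; exact hx0
    | succ m => exact (hproj m).1
  have hxC : ∀ n, x n ∈ C := by
    intro n; have := hanti (Nat.zero_le n) (hxCS n); rwa [hCS0] at this
  -- y 0 i = x 0
  have hy0 : ∀ i, y 0 i = x 0 := by
    intro i
    rw [hy]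
    simp only [Function.iterate_zero, id_eq]
    rw [← add_smul]; ring_nf; exact one_smul ℝ (x 0)
  -- F ⊆ CS n
  have hFsub : ∀ n, F ⊆ CS n := by
    intro n
    induction n with
    | zero => rw [hCS0]; exact fun u hu => hFC u hu
    | succ n ih =>
      intro u hu
      rw [hCS n]
      refine ⟨ih hu, ?_⟩
      have huC : u ∈ C := hFC u hu
      rcases Nat.eq_zero_or_pos n with h0 | h1
      · subst h0
        rw [hy0]
        nlinarith [hk 0, sq_nonneg (ω + ‖x 0‖)]
      · set i := i_ n
        set t := α n with ht
        set X := x n with hX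
        set w := (T i)^[n] X with hw
        have ht0 : 0 ≤ t := (hα n).1
        have ht1 : t ≤ 1 := (hα n).2
        have hAQ : ‖u - w‖ ^ 2 ≤ k n * ‖u - X‖ ^ 2 :=
          hAQN i n h1 u huC (hFT u hu i) X (hxC n)
        have hdecomp : u - y n i = t • (u - X) + (1 - t) • (u - w) := by
          rw [hy]; module
        have hnorm : ‖u - y n i‖ ≤ t * ‖u - X‖ + (1 - t) * ‖u - w‖ := by
          rw [hdecomp]
          refine (norm_add_le _ _).trans ?_
          rw [norm_smul, norm_smul, Real.norm_eq_abs, Real.norm_eq_abs,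
            abs_of_nonneg ht0, abs_of_nonneg (by linarith)]
        have hAbound : ‖u - X‖ ≤ ω + ‖X‖ := by
          have h1 := norm_sub_le u X
          have h2 := hFbdd u hu
          linarith
        set A := ‖u - X‖ with hA
        set B := ‖u - w‖ with hB
        have hA0 : 0 ≤ A := norm_nonneg _
        have hB0 : 0 ≤ B := norm_nonneg _
        have s1 : ‖u - y n i‖ ^ 2 ≤ (t * A + (1 - t) * B) ^ 2 :=
          pow_le_pow_left₀ (norm_nonneg _) hnorm 2
        have s2 : (t * A + (1 - t) * B) ^ 2 ≤ t * A ^ 2 + (1 - t) * B ^ 2 := by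
          nlinarith [mul_nonneg (mul_nonneg ht0 (by linarith : (0:ℝ) ≤ 1 - t)) (sq_nonneg (A - B))]
        have s3 : t * A ^ 2 + (1 - t) * B ^ 2 ≤ t * A ^ 2 + (1 - t) * (k n * A ^ 2) := by
          have := mul_le_mul_of_nonneg_left hAQ (by linarith : (0:ℝ) ≤ 1 - t)
          linarith
        have s4 : t * A ^ 2 + (1 - t) * (k n * A ^ 2) ≤ A ^ 2 + (k n - 1) * A ^ 2 := by
          nlinarith [mul_nonneg (mul_nonneg ht0 (by linarith [hk n] : (0:ℝ) ≤ k n - 1)) (sq_nonneg A)]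
        have s5 : (k n - 1) * A ^ 2 ≤ (k n - 1) * (ω + ‖X‖) ^ 2 := by
          have hsq : A ^ 2 ≤ (ω + ‖X‖) ^ 2 := pow_le_pow_left₀ hA0 hAbound 2
          exact mul_le_mul_of_nonneg_left hsq (by linarith [hk n])
        calc ‖u - y n i‖ ^ 2 ≤ A ^ 2 + (k n - 1) * A ^ 2 := by linarith
          _ ≤ ‖u - X‖ ^ 2 + (k n - 1) * (ω + ‖X‖) ^ 2 := by rw [← hA]; linarith
  -- closedness of CS n
  have hclosed : ∀ n, IsClosed (CS n) := by
    intro n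
    induction n with
    | zero => rw [hCS0]; exact hCcl
    | succ n ih =>
      rw [hCS n]
      have : IsClosed {v : H | ‖v - y n (i_ n)‖ ^ 2 ≤ ‖v - x n‖ ^ 2 + (k n - 1) * (ω + ‖x n‖) ^ 2} := by
        apply isClosed_le
        · exact ((continuous_id.sub continuous_const).norm.pow 2)
        · exact (((continuous_id.sub continuous_const).norm.pow 2).add continuous_const)
      exact ih.inter this
  -- convexity of CS n
  have hconv : ∀ n, Convex ℝ (CS n) := by
    intro n
    induction n with
    | zero => rw [hCS0]; exact hCcv
    | succ n ih =>
      rw [hCS n]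
      set a := y n (i_ n)
      set b := x n
      set c := (k n - 1) * (ω + ‖x n‖) ^ 2
      have hiff : ∀ v : H, (‖v - a‖ ^ 2 ≤ ‖v - b‖ ^ 2 + c) ↔
          ((inner ℝ v (b - a) : ℝ) ≤ (‖b‖ ^ 2 - ‖a‖ ^ 2 + c) / 2) := by
        intro v
        rw [norm_sub_sq_real, norm_sub_sq_real, inner_sub_right]
        constructor <;> intro h <;> linarith
      have heq : {v | v ∈ CS n ∧ ‖v - a‖ ^ 2 ≤ ‖v - b‖ ^ 2 + c}
          = CS n ∩ {v : H | (inner ℝ v (b - a) : ℝ) ≤ (‖b‖ ^ 2 - ‖a‖ ^ 2 + c) / 2} :=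
        Set.ext fun v => and_congr Iff.rfl (hiff v)
      rw [heq]
      refine ih.inter (convex_halfSpace_le ⟨fun u v => inner_add_left u v _,
        fun r u => real_inner_smul_left u _ r⟩ _)
  -- the distance sequence
  set a : ℕ → ℝ := fun n => ‖x n - x 0‖ with ha
  have ha0 : a 0 = 0 := by simp [ha]
  have hmin : ∀ n, ∀ v ∈ CS (n + 1), a (n + 1) ≤ ‖v - x 0‖ := fun n => (hproj n).2
  have hamono : Monotone a := by
    apply monotone_nat_of_le_succ
    intro n
    cases n with
    | zero => rw [ha0]; exact norm_nonneg _
    | succ m => exact hmin m (x (m + 2)) (hsucc (m + 1) (hxCS (m + 2)))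
  have habdd : ∀ n, a n ≤ ‖p - x 0‖ := by
    intro n
    cases n with
    | zero => rw [ha0]; exact norm_nonneg _
    | succ m => exact hmin m p (hFsub (m + 1) hp)
  have hbdd : BddAbove (Set.range a) := ⟨‖p - x 0‖, by rintro _ ⟨n, rfl⟩; exact habdd n⟩
  set b := ⨆ n, a n with hb
  have ha_lim : Tendsto a atTop (𝓝 b) := tendsto_atTop_ciSup hamono hbdd
  have hab : ∀ n, a n ≤ b := fun n => le_ciSup hbdd n
  have ha_nonneg : ∀ n, 0 ≤ a n := fun n => norm_nonneg _
  -- key parallelogram estimate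
  have hG : ∀ n m : ℕ, 1 ≤ n → n ≤ m → ‖x n - x m‖ ^ 2 ≤ 2 * (a m) ^ 2 - 2 * (a n) ^ 2 := by
    intro n m h1 hnm
    obtain ⟨j, rfl⟩ : ∃ j, n = j + 1 := ⟨n - 1, by omega⟩
    set mid := (1 / 2 : ℝ) • x (j + 1) + (1 / 2 : ℝ) • x m with hmid
    have hmidCS : mid ∈ CS (j + 1) :=
      hconv (j + 1) (hxCS (j + 1)) (hanti hnm (hxCS m)) (by norm_num) (by norm_num) (by norm_num)
    have hm1 : a (j + 1) ≤ ‖mid - x 0‖ := hmin j mid hmidCS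
    have hm2 : a (j + 1) ^ 2 ≤ ‖mid - x 0‖ ^ 2 := pow_le_pow_left₀ (ha_nonneg _) hm1 2
    have hpar := parallelogram_law_with_norm ℝ (x (j + 1) - x 0) (x m - x 0)
    rw [show x (j + 1) - x 0 - (x m - x 0) = x (j + 1) - x m from by abel] at hpar
    have hsum : x (j + 1) - x 0 + (x m - x 0) = (2 : ℝ) • (mid - x 0) := by
      rw [hmid]; module
    have h1' : ‖x (j + 1) - x 0 + (x m - x 0)‖ = 2 * ‖mid - x 0‖ := by
      rw [hsum, norm_smul]; simp
    rw [h1'] at hpar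
    have hax : a (j + 1) = ‖x (j + 1) - x 0‖ := rfl
    have ham : a m = ‖x m - x 0‖ := rfl
    nlinarith [hpar, hm2, norm_nonneg (mid - x 0)]
  -- Cauchy
  have hzsq : Tendsto (fun n => a n * a n) atTop (𝓝 (b * b)) := ha_lim.mul ha_lim
  have hcauchy : CauchySeq x := by
    rw [Metric.cauchySeq_iff']
    intro ε hε
    rw [Metric.tendsto_atTop] at hzsq
    obtain ⟨N0, hN0⟩ := hzsq (ε ^ 2 / 2) (by positivity)
    refine ⟨N0 + 1, fun m hm => ?_⟩
    have hkey := hG (N0 + 1) m (by omega) hm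
    have hb1 : a m ≤ b := hab m
    have hb2 : |a N0.succ * a N0.succ - b * b| < ε ^ 2 / 2 := by
      have := hN0 (N0 + 1) (by omega)
      rwa [Real.dist_eq] at this
    have hb3 : b * b - a (N0 + 1) * a (N0 + 1) < ε ^ 2 / 2 := by
      rcases abs_lt.mp hb2 with ⟨h, _⟩; linarith
    have hsq : ‖x m - x (N0 + 1)‖ ^ 2 < ε ^ 2 := by
      rw [norm_sub_rev]
      nlinarith [ha_nonneg m, ha_nonneg (N0 + 1)]
    rw [dist_eq_norm]
    nlinarith [norm_nonneg (x m - x (N0 + 1))]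
  obtain ⟨z, hz⟩ := cauchySeq_tendsto_of_complete hcauchy
  -- z ∈ CS n for all n
  have hzCS : ∀ n, z ∈ CS n := by
    intro n
    refine (hclosed n).mem_of_tendsto hz (Filter.eventually_atTop.mpr ⟨n, fun m hm => hanti hm (hxCS m)⟩)
  have hzC : z ∈ C := by have := hzCS 0; rwa [hCS0] at this
  -- bound on ‖x n‖
  set M := ‖x 0‖ + ‖p - x 0‖ with hM
  have hxM : ∀ n, ‖x n‖ ≤ M := by
    intro n
    have h1 : ‖x n‖ ≤ ‖x n - x 0‖ + ‖x 0‖ := by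
      have := norm_add_le (x n - x 0) (x 0); simpa using this
    have := habdd n
    rw [ha] at this
    simp only [hM]; linarith
  -- epsilon tends to zero
  have heps : Tendsto (fun n => (k n - 1) * (ω + ‖x n‖) ^ 2) atTop (𝓝 0) := by
    have hub : ∀ n, (k n - 1) * (ω + ‖x n‖) ^ 2 ≤ (k n - 1) * (ω + M) ^ 2 := by
      intro n
      have h1 : (ω + ‖x n‖) ^ 2 ≤ (ω + M) ^ 2 :=
        pow_le_pow_left₀ (by positivity) (by linarith [hxM n]) 2
      exact mul_le_mul_of_nonneg_left h1 (by linarith [hk n])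
    have hlim : Tendsto (fun n => (k n - 1) * (ω + M) ^ 2) atTop (𝓝 0) := by
      have := (hklim.sub (tendsto_const_nhds : Tendsto (fun _ : ℕ => (1:ℝ)) atTop (𝓝 1))).mul_const ((ω + M) ^ 2)
      simpa using this
    exact squeeze_zero (fun n => mul_nonneg (by linarith [hk n]) (sq_nonneg _)) hub hlim
  -- x (n+1) - x n → 0
  have hshift : Tendsto (fun n => x (n + 1)) atTop (𝓝 z) := hz.comp (tendsto_add_atTop_nat 1)
  have hdn : Tendsto (fun n => ‖x (n + 1) - x n‖) atTop (𝓝 0) := by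
    have := (hshift.sub hz).norm
    simpa using this
  -- ‖x(n+1) - ybar n‖ → 0
  have hK1 : ∀ n, ‖x (n + 1) - y n (i_ n)‖ ^ 2 ≤ ‖x (n + 1) - x n‖ ^ 2 + (k n - 1) * (ω + ‖x n‖) ^ 2 := by
    intro n
    have := hxCS (n + 1)
    rw [hCS n] at this
    exact this.2
  have hsq1 : Tendsto (fun n => ‖x (n + 1) - y n (i_ n)‖ ^ 2) atTop (𝓝 0) := by
    have hlim : Tendsto (fun n => ‖x (n + 1) - x n‖ ^ 2 + (k n - 1) * (ω + ‖x n‖) ^ 2) atTop (𝓝 0) := by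
      have := (hdn.pow 2).add heps
      simpa using this
    exact squeeze_zero (fun n => sq_nonneg _) hK1 hlim
  have hy1 : Tendsto (fun n => ‖x (n + 1) - y n (i_ n)‖) atTop (𝓝 0) := by
    have h := (Real.continuous_sqrt.tendsto 0).comp hsq1
    simp only [Function.comp_def, Real.sqrt_zero] at h
    convert h using 2 with n
    rw [Real.sqrt_sq (norm_nonneg _)]
  -- ‖ybar n - x n‖ → 0
  have hybar : Tendsto (fun n => ‖y n (i_ n) - x n‖) atTop (𝓝 0) := by
    have hub : ∀ n, ‖y n (i_ n) - x n‖ ≤ ‖x (n + 1) - y n (i_ n)‖ + ‖x (n + 1) - x n‖ := by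
      intro n
      have h := norm_add_le (y n (i_ n) - x (n + 1)) (x (n + 1) - x n)
      rw [show y n (i_ n) - x (n + 1) + (x (n + 1) - x n) = y n (i_ n) - x n from by abel] at h
      rw [norm_sub_rev (y n (i_ n)) (x (n + 1))] at h
      exact h
    have hlim := hy1.add hdn
    rw [add_zero] at hlim
    exact squeeze_zero (fun n => norm_nonneg _) hub hlim
  -- iterate residuals → 0
  have hTn : ∀ i, Tendsto (fun n => ‖(T i)^[n] (x n) - x n‖) atTop (𝓝 0) := by
    intro i
    have hev : ∀ᶠ n in atTop, α n < 1 / 2 :=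
      hαlim.eventually_lt_const (by norm_num : (0:ℝ) < 1 / 2)
    have hyi : ∀ n, ‖y n i - x n‖ = (1 - α n) * ‖(T i)^[n] (x n) - x n‖ := by
      intro n
      have hdec : y n i - x n = (1 - α n) • ((T i)^[n] (x n) - x n) := by
        rw [hy]; module
      rw [hdec, norm_smul, Real.norm_eq_abs, abs_of_nonneg (by linarith [(hα n).2])]
    have hub : ∀ᶠ n in atTop, ‖(T i)^[n] (x n) - x n‖ ≤ 2 * ‖y n (i_ n) - x n‖ := by
      filter_upwards [hev] with n hn
      have h1 := hyi n
      have h2 := hmax n i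
      have h3 : 0 ≤ ‖(T i)^[n] (x n) - x n‖ := norm_nonneg _
      nlinarith [(hα n).1]
    have hlim := hybar.const_mul 2
    rw [mul_zero] at hlim
    exact squeeze_zero' (Filter.Eventually.of_forall fun n => norm_nonneg _) hub hlim
  -- ‖T i (x n) - x n‖ → 0
  have hTres : ∀ i, Tendsto (fun n => ‖T i (x n) - x n‖) atTop (𝓝 0) := by
    intro i
    have hxCn : ∀ n, (T i)^[n] (x n) ∈ C := fun n => (hTmaps i).iterate n (hxC n)
    have hub : ∀ n, ‖T i (x n) - x n‖ ≤
        L i * ‖x n - (T i)^[n] (x n)‖ + L i * ‖x n - x (n + 1)‖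
          + ‖(T i)^[n + 1] (x (n + 1)) - x (n + 1)‖ + ‖x (n + 1) - x n‖ := by
      intro n
      have t1 : dist (T i (x n)) ((T i)^[n + 1] (x n)) ≤ L i * ‖x n - (T i)^[n] (x n)‖ := by
        rw [dist_eq_norm]
        have e1 : (T i)^[n + 1] (x n) = (T i)^[1] ((T i)^[n] (x n)) := by
          rw [Function.iterate_one, Function.iterate_succ_apply']
        have e2 : T i (x n) = (T i)^[1] (x n) := by rw [Function.iterate_one]
        rw [e1, e2]
        exact hLip i 1 le_rfl (x n) (hxC n) _ (hxCn n)
      have t2 : dist ((T i)^[n + 1] (x n)) ((T i)^[n + 1] (x (n + 1))) ≤ L i * ‖x n - x (n + 1)‖ := by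
        rw [dist_eq_norm]
        exact hLip i (n + 1) (by omega) (x n) (hxC n) (x (n + 1)) (hxC (n + 1))
      have t3 : dist ((T i)^[n + 1] (x (n + 1))) (x (n + 1)) = ‖(T i)^[n + 1] (x (n + 1)) - x (n + 1)‖ :=
        dist_eq_norm _ _
      have t4 : dist (x (n + 1)) (x n) = ‖x (n + 1) - x n‖ := dist_eq_norm _ _
      have tri1 : dist (T i (x n)) (x n) ≤ dist (T i (x n)) (x (n + 1)) + dist (x (n + 1)) (x n) :=
        dist_triangle _ _ _
      have tri2 : dist (T i (x n)) (x (n + 1)) ≤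
          dist (T i (x n)) ((T i)^[n + 1] (x n)) + dist ((T i)^[n + 1] (x n)) ((T i)^[n + 1] (x (n + 1)))
            + dist ((T i)^[n + 1] (x (n + 1))) (x (n + 1)) := dist_triangle4 _ _ _ _
      have hfin : dist (T i (x n)) (x n) = ‖T i (x n) - x n‖ := dist_eq_norm _ _
      rw [hfin] at tri1
      rw [t3] at tri2
      rw [t4] at tri1
      linarith
    have hlim : Tendsto (fun n => L i * ‖x n - (T i)^[n] (x n)‖ + L i * ‖x n - x (n + 1)‖
        + ‖(T i)^[n + 1] (x (n + 1)) - x (n + 1)‖ + ‖x (n + 1) - x n‖) atTop (𝓝 0) := by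
      have l1 : Tendsto (fun n => ‖x n - (T i)^[n] (x n)‖) atTop (𝓝 0) := by
        have := hTn i
        simpa [norm_sub_rev] using this
      have l2 : Tendsto (fun n => ‖x n - x (n + 1)‖) atTop (𝓝 0) := by
        simpa [norm_sub_rev] using hdn
      have l3 : Tendsto (fun n => ‖(T i)^[n + 1] (x (n + 1)) - x (n + 1)‖) atTop (𝓝 0) :=
        (hTn i).comp (tendsto_add_atTop_nat 1)
      have := (((l1.const_mul (L i)).add (l2.const_mul (L i))).add l3).add hdn
      simpa using this
    exact squeeze_zero (fun n => norm_nonneg _) hub hlim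
  -- T i z = z
  have hxz : Tendsto (fun n => ‖x n - z‖) atTop (𝓝 0) := by
    have := (hz.sub (tendsto_const_nhds : Tendsto (fun _ : ℕ => z) atTop (𝓝 z))).norm
    simpa using this
  have hTz : ∀ i, T i z = z := by
    intro i
    have hc1 : Tendsto (fun n => T i (x n)) atTop (𝓝 z) := by
      rw [tendsto_iff_norm_sub_tendsto_zero]
      have hub : ∀ n, ‖T i (x n) - z‖ ≤ ‖T i (x n) - x n‖ + ‖x n - z‖ := by
        intro n
        have h := norm_add_le (T i (x n) - x n) (x n - z)
        rw [show T i (x n) - x n + (x n - z) = T i (x n) - z from by abel] at h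
        exact h
      have hlim := (hTres i).add hxz
      rw [add_zero] at hlim
      exact squeeze_zero (fun n => norm_nonneg _) hub hlim
    have hc2 : Tendsto (fun n => T i (x n)) atTop (𝓝 (T i z)) := by
      rw [tendsto_iff_norm_sub_tendsto_zero]
      have hub : ∀ n, ‖T i (x n) - T i z‖ ≤ L i * ‖x n - z‖ := by
        intro n
        have := hLip i 1 le_rfl (x n) (hxC n) z hzC
        simpa [Function.iterate_one] using this
      have hlim := hxz.const_mul (L i)
      rw [mul_zero] at hlim
      exact squeeze_zero (fun n => norm_nonneg _) hub hlim
    exact tendsto_nhds_unique hc2 hc1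
  have hzF : z ∈ F := by
    rw [hF]
    exact Set.mem_iInter.mpr fun i => ⟨hzC, hTz i⟩
  refine ⟨z, hzF, ?_, hz⟩
  intro v hv
  have hvb : ∀ n, ‖x (n + 1) - x 0‖ ≤ ‖v - x 0‖ := fun n => (hproj n).2 v (hFsub (n + 1) hv)
  have hlim : Tendsto (fun n => ‖x (n + 1) - x 0‖) atTop (𝓝 ‖z - x 0‖) :=
    (hshift.sub tendsto_const_nhds).norm
  exact le_of_tendsto hlim (Filter.Eventually.of_forall hvb)
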